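/- arXiv:1804.10349 — 2 statements merged into one kernel-verified Lean document; each statement's English description precedes it below -/
import Mathlib

section
/- Each of the spaces (N̄^q_{Δ⁻})_∞, equipped with the norm ‖x‖ = sup_n |τ_n(x)|, is a BK space: it is a Banach space over ℂ and, for each k, the coordinate functional x ↦ x_k is continuous on it. -/
open Finset Filter Topology

namespace NqDelta

noncomputable section

/-- `Qs q n = ∑_{i=0}^n q i`. -/
def Qs (q : ℕ → ℝ) (n : ℕ) : ℝ := ∑ i ∈ Finset.range (n + 1), q i

/-- The difference operator `(Δ⁻ x)_k = x_{k-1} - x_k`, with `x_{-1} = 0`. -/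
def deltaM (x : ℕ → ℂ) (k : ℕ) : ℂ := (if k = 0 then 0 else x (k - 1)) - x k

/-- `τ_n(x) = (1/Q_n) ∑_{k=0}^n q_k (Δ⁻ x)_k`. -/
def tau (q : ℕ → ℝ) (x : ℕ → ℂ) (n : ℕ) : ℂ :=
  ((Qs q n : ℂ))⁻¹ * ∑ k ∈ Finset.range (n + 1), (q k : ℂ) * deltaM x k

/-- The space `(N̄^q_{Δ⁻})_0 = {x : τ_n(x) → 0}`. -/
def Nzero (q : ℕ → ℝ) : Set (ℕ → ℂ) := {x | Tendsto (tau q x) atTop (𝓝 0)}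

/-- The space `(N̄^q_{Δ⁻}) = {x : (τ_n(x)) converges}`. -/
def Nconv (q : ℕ → ℝ) : Set (ℕ → ℂ) := {x | ∃ l : ℂ, Tendsto (tau q x) atTop (𝓝 l)}

/-- The space `(N̄^q_{Δ⁻})_∞ = {x : sup_n |τ_n(x)| < ∞}`. -/
def Ninf (q : ℕ → ℝ) : Set (ℕ → ℂ) := {x | ∃ M : ℝ, ∀ n, ‖tau q x n‖ ≤ M}

/-- The norm `‖x‖ = sup_n |τ_n(x)|`. -/
def Nnorm (q : ℕ → ℝ) (x : ℕ → ℂ) : ℝ := ⨆ n, ‖tau q x n‖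

/-- The `m`-th section `x^{[m]} = (x_0, …, x_m, 0, 0, …)` of a sequence `x`. -/
def secTrunc (x : ℕ → ℂ) (m : ℕ) : ℕ → ℂ := fun k => if k ≤ m then x k else 0

/-- The sequence `s^{(k)}`: `s^{(k)}_n = Q_k(1/q_{k+1} - 1/q_k)` for `n > k`,
`s^{(k)}_k = -Q_k/q_k`, and `s^{(k)}_n = 0` for `n < k`. -/
def sseq (q : ℕ → ℝ) (k : ℕ) : ℕ → ℂ := fun n =>
  if n < k then 0
  else if n = k then ((-(Qs q k / q k) : ℝ) : ℂ)
  else ((Qs q k * (1 / q (k + 1) - 1 / q k) : ℝ) : ℂ)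

/-- The sequence `s^{(-1)}`, with `s^{(-1)}_n = ∑_{k=0}^{n-1} Q_k(1/q_{k+1} - 1/q_k) - Q_n/q_n`. -/
def sminus (q : ℕ → ℝ) : ℕ → ℂ := fun n =>
  (((∑ k ∈ Finset.range n, Qs q k * (1 / q (k + 1) - 1 / q k)) - Qs q n / q n : ℝ) : ℂ)

/-- The matrix `C = (c_{nk})` associated with a sequence `a`. -/
def Cmat (q : ℕ → ℝ) (a : ℕ → ℂ) (n k : ℕ) : ℂ :=
  if k < n then ((Qs q k * (1 / q (k + 1) - 1 / q k) : ℝ) : ℂ) * ∑ j ∈ Finset.Icc (k + 1) n, a j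
  else if k = n then -(((Qs q n / q n : ℝ) : ℂ) * a n)
  else 0

/-- `exprD q a m = ∑_{k=0}^{m-1} Q_k |(1/q_{k+1} - 1/q_k) ∑_{j=k+1}^m a_j| + |Q_m a_m / q_m|`. -/
def exprD (q : ℕ → ℝ) (a : ℕ → ℂ) (m : ℕ) : ℝ :=
  (∑ k ∈ Finset.range m,
      Qs q k * ‖((1 / q (k + 1) - 1 / q k : ℝ) : ℂ) * ∑ j ∈ Finset.Icc (k + 1) m, a j‖) +
    ‖((Qs q m / q m : ℝ) : ℂ) * a m‖

/-- The space `c₀` of null complex sequences. -/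
def czero : Set (ℕ → ℂ) := {y | Tendsto y atTop (𝓝 0)}

/-- The space `c` of convergent complex sequences. -/
def cconv : Set (ℕ → ℂ) := {y | ∃ l : ℂ, Tendsto y atTop (𝓝 l)}

/-- The space `ℓ_∞` of bounded complex sequences. -/
def linf : Set (ℕ → ℂ) := {y | ∃ M : ℝ, ∀ n, ‖y n‖ ≤ M}

/-- `A ∈ (X, Y)`: for every `x ∈ X` every row series `A_n(x)` converges and `Ax ∈ Y`. -/
def matMem (A : ℕ → ℕ → ℂ) (X Y : Set (ℕ → ℂ)) : Prop :=
  ∀ x ∈ X, ∃ y ∈ Y, ∀ n,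
    Tendsto (fun m => ∑ k ∈ Finset.range (m + 1), A n k * x k) atTop (𝓝 (y n))

/-- Condition (C): `sup_{m,n} exprD q (A n) m < ∞`. -/
def condC (q : ℕ → ℝ) (A : ℕ → ℕ → ℂ) : Prop := ∃ M : ℝ, ∀ m n, exprD q (A n) m ≤ M

/-- `‖A‖^{(s)} = sup_{n > s} sup_m exprD q (A n) m`. -/
def normS (q : ℕ → ℝ) (A : ℕ → ℕ → ℂ) (s : ℕ) : ℝ :=
  ⨆ n, ⨆ (_ : s < n), ⨆ m, exprD q (A n) m

/-- The supremum distance `sup_n |y_n - z_n|` between two sequences. -/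
def supDist (y z : ℕ → ℂ) : ℝ := ⨆ n, ‖y n - z n‖

/-- The Hausdorff measure of noncompactness of `S` as a subset of the metric space `Y`
(with the supremum metric): `inf {ε > 0 : S has a finite ε-net in Y}`. -/
def chiIn (Y S : Set (ℕ → ℂ)) : ℝ :=
  sInf {ε : ℝ | 0 < ε ∧ ∃ T : Finset (ℕ → ℂ), (↑T : Set (ℕ → ℂ)) ⊆ Y ∧
    ∀ y ∈ S, ∃ t ∈ T, supDist y t < ε}

/-- The image `A F` of the closed unit ball `F = {x ∈ X : ‖x‖ ≤ 1}` under the matrix map `A`. -/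
def matImageBall (q : ℕ → ℝ) (A : ℕ → ℕ → ℂ) (X : Set (ℕ → ℂ)) : Set (ℕ → ℂ) :=
  {y | ∃ x, x ∈ X ∧ Nnorm q x ≤ 1 ∧ ∀ n,
    Tendsto (fun m => ∑ k ∈ Finset.range (m + 1), A n k * x k) atTop (𝓝 (y n))}

end

end NqDelta

open NqDelta

namespace NqAux

variable {q : ℕ → ℝ}

lemma Qs_pos (hq : ∀ k, 0 < q k) (n : ℕ) : 0 < Qs q n :=
  Finset.sum_pos (fun i _ => hq i) (by simp)

lemma deltaM_add (x y : ℕ → ℂ) (k : ℕ) : deltaM (x + y) k = deltaM x k + deltaM y k := by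
  unfold deltaM; split <;> simp <;> ring

lemma deltaM_smul (a : ℂ) (x : ℕ → ℂ) (k : ℕ) : deltaM (a • x) k = a * deltaM x k := by
  unfold deltaM; split <;> simp <;> ring

lemma tau_add (x y : ℕ → ℂ) (n : ℕ) : tau q (x + y) n = tau q x n + tau q y n := by
  unfold tau
  rw [← mul_add, ← Finset.sum_add_distrib]
  congr 1
  refine Finset.sum_congr rfl fun k _ => ?_
  rw [deltaM_add]; ring

lemma tau_smul (a : ℂ) (x : ℕ → ℂ) (n : ℕ) : tau q (a • x) n = a * tau q x n := by
  unfold tau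
  simp only [deltaM_smul]
  rw [show ∑ k ∈ Finset.range (n + 1), (q k : ℂ) * (a * deltaM x k)
      = a * ∑ k ∈ Finset.range (n + 1), (q k : ℂ) * deltaM x k from by
    rw [Finset.mul_sum]; exact Finset.sum_congr rfl fun k _ => by ring]
  ring

lemma tau_zero (n : ℕ) : tau q (0 : ℕ → ℂ) n = 0 := by
  unfold tau deltaM; simp

lemma tau_neg (x : ℕ → ℂ) (n : ℕ) : tau q (-x) n = -tau q x n := by
  have : (-x) = (-1 : ℂ) • x := by funext k; simp
  rw [this, tau_smul]; ring

lemma tau_sub (x y : ℕ → ℂ) (n : ℕ) : tau q (x - y) n = tau q x n - tau q y n := by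
  have : x - y = x + (-y) := by funext k; simp; ring
  rw [this, tau_add, tau_neg]; ring

/-- sum form of tau -/
lemma S_eq (hq : ∀ k, 0 < q k) (x : ℕ → ℂ) (n : ℕ) :
    ∑ k ∈ Finset.range (n + 1), (q k : ℂ) * deltaM x k = (Qs q n : ℂ) * tau q x n := by
  unfold tau
  rw [← mul_assoc, mul_inv_cancel₀, one_mul]
  exact_mod_cast (Qs_pos hq n).ne'

noncomputable def Cc (q : ℕ → ℝ) (k : ℕ) : ℝ := ∑ j ∈ Finset.range (k + 1), 2 * Qs q j / q j

lemma Cc_pos (hq : ∀ k, 0 < q k) (k : ℕ) : 0 < Cc q k :=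
  Finset.sum_pos (fun j _ => by have h1 := Qs_pos hq j; have h2 := hq j; positivity) (by simp)

lemma norm_QsTau_le (hq : ∀ k, 0 < q k) {x : ℕ → ℂ} {M : ℝ}
    (hM : ∀ n, ‖tau q x n‖ ≤ M) (n : ℕ) : ‖(Qs q n : ℂ) * tau q x n‖ ≤ Qs q n * M := by
  rw [norm_mul, Complex.norm_real, Real.norm_eq_abs, abs_of_pos (Qs_pos hq n)]
  exact mul_le_mul_of_nonneg_left (hM n) (Qs_pos hq n).le

lemma coord_bound (hq : ∀ k, 0 < q k) (x : ℕ → ℂ) (M : ℝ)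
    (hM : ∀ n, ‖tau q x n‖ ≤ M) (k : ℕ) : ‖x k‖ ≤ Cc q k * M := by
  have hM0 : 0 ≤ M := le_trans (norm_nonneg _) (hM 0)
  induction k with
  | zero =>
    have h0 := S_eq hq x 0
    simp [deltaM] at h0
    have hx0 : (q 0 : ℂ) * x 0 = -((Qs q 0 : ℂ) * tau q x 0) := by linear_combination -h0
    have hn : ‖(q 0 : ℂ) * x 0‖ ≤ Qs q 0 * M := by
      rw [hx0, norm_neg]; exact norm_QsTau_le hq hM 0
    rw [norm_mul, Complex.norm_real, Real.norm_eq_abs, abs_of_pos (hq 0)] at hn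
    have hCc : Cc q 0 = 2 * Qs q 0 / q 0 := by simp [Cc]
    rw [hCc]
    have h1 : ‖x 0‖ ≤ Qs q 0 / q 0 * M := by
      rw [div_mul_eq_mul_div, le_div_iff₀ (hq 0), mul_comm (‖x 0‖)]
      linarith [hn]
    calc ‖x 0‖ ≤ Qs q 0 / q 0 * M := h1
      _ ≤ 2 * Qs q 0 / q 0 * M := by
          gcongr <;> first
            | exact hM0
            | exact hq 0
            | exact (hq 0).le
            | linarith [Qs_pos hq 0]
  | succ k ih =>
    have hS := S_eq hq x (k + 1)
    rw [Finset.sum_range_succ, S_eq hq x k] at hS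
    have hd : deltaM x (k + 1) = x k - x (k + 1) := by
      simp [deltaM]
    rw [hd] at hS
    -- (q (k+1):ℂ) * x (k+1) = (q (k+1):ℂ) * x k + (Qs q k) τ_k - (Qs q (k+1)) τ_{k+1}
    have key : (q (k + 1) : ℂ) * x (k + 1) =
        (q (k + 1) : ℂ) * x k + (Qs q k : ℂ) * tau q x k - (Qs q (k + 1) : ℂ) * tau q x (k + 1) := by
      linear_combination -hS
    have hn : ‖(q (k + 1) : ℂ) * x (k + 1)‖ ≤ q (k + 1) * ‖x k‖ + Qs q k * M + Qs q (k + 1) * M := by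
      rw [key]
      calc ‖_ + _ - _‖ ≤ ‖(q (k + 1) : ℂ) * x k + (Qs q k : ℂ) * tau q x k‖ +
            ‖(Qs q (k + 1) : ℂ) * tau q x (k + 1)‖ := norm_sub_le _ _
        _ ≤ ‖(q (k + 1) : ℂ) * x k‖ + ‖(Qs q k : ℂ) * tau q x k‖ +
            ‖(Qs q (k + 1) : ℂ) * tau q x (k + 1)‖ := by
              gcongr; exact norm_add_le _ _
        _ ≤ q (k + 1) * ‖x k‖ + Qs q k * M + Qs q (k + 1) * M := by
              gcongr
              · rw [norm_mul, Complex.norm_real, Real.norm_eq_abs, abs_of_pos (hq (k + 1))]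
              · exact norm_QsTau_le hq hM k
              · exact norm_QsTau_le hq hM (k + 1)
    rw [norm_mul, Complex.norm_real, Real.norm_eq_abs, abs_of_pos (hq (k + 1))] at hn
    have hQle : Qs q k ≤ Qs q (k + 1) := by
      unfold Qs
      apply Finset.sum_le_sum_of_subset_of_nonneg
      · exact Finset.range_subset_range.mpr (by omega)
      · exact fun i _ _ => (hq i).le
    have hCc : Cc q (k + 1) = Cc q k + 2 * Qs q (k + 1) / q (k + 1) := by
      simp [Cc, Finset.sum_range_succ]
    rw [hCc]
    rw [← mul_le_mul_iff_right₀ (hq (k + 1))]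
    have expand : q (k + 1) * ((Cc q k + 2 * Qs q (k + 1) / q (k + 1)) * M)
        = q (k + 1) * (Cc q k * M) + 2 * Qs q (k + 1) * M := by
      have hne : q (k + 1) ≠ 0 := (hq (k + 1)).ne'
      field_simp
    rw [expand]
    have : q (k + 1) * ‖x k‖ ≤ q (k + 1) * (Cc q k * M) :=
      mul_le_mul_of_nonneg_left ih (hq (k + 1)).le
    nlinarith [Qs_pos hq (k + 1), mul_le_mul_of_nonneg_left hQle hM0]

lemma bddAbove_of_mem (x : ℕ → ℂ) (hx : x ∈ Ninf q) :
    BddAbove (Set.range fun n => ‖tau q x n‖) := by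
  obtain ⟨M, hM⟩ := hx
  exact ⟨M, by rintro r ⟨n, rfl⟩; exact hM n⟩

lemma le_Nnorm (x : ℕ → ℂ) (hx : x ∈ Ninf q) (n : ℕ) : ‖tau q x n‖ ≤ Nnorm q x :=
  le_ciSup (bddAbove_of_mem x hx) n

lemma Nnorm_nonneg (x : ℕ → ℂ) (hx : x ∈ Ninf q) : 0 ≤ Nnorm q x :=
  le_trans (norm_nonneg _) (le_Nnorm x hx 0)

lemma Ninf_add (x : ℕ → ℂ) (hx : x ∈ Ninf q) (y : ℕ → ℂ) (hy : y ∈ Ninf q) :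
    x + y ∈ Ninf q := by
  obtain ⟨M₁, h₁⟩ := hx; obtain ⟨M₂, h₂⟩ := hy
  exact ⟨M₁ + M₂, fun n => by
    rw [tau_add]; exact (norm_add_le _ _).trans (add_le_add (h₁ n) (h₂ n))⟩

lemma Ninf_smul (a : ℂ) (x : ℕ → ℂ) (hx : x ∈ Ninf q) : a • x ∈ Ninf q := by
  obtain ⟨M, hM⟩ := hx
  exact ⟨‖a‖ * M, fun n => by
    rw [tau_smul, norm_mul]
    exact mul_le_mul_of_nonneg_left (hM n) (norm_nonneg a)⟩

lemma Ninf_sub (x : ℕ → ℂ) (hx : x ∈ Ninf q) (y : ℕ → ℂ) (hy : y ∈ Ninf q) :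
    x - y ∈ Ninf q := by
  have : x - y = x + (-1 : ℂ) • y := by funext k; simp; ring
  rw [this]; exact Ninf_add x hx _ (Ninf_smul _ y hy)

end NqAux

/-- `(N̄^q_{Δ⁻})_∞`, with the norm `‖x‖ = sup_n |τ_n(x)|`, is a BK space:
it is a Banach space over `ℂ` (a `ℂ`-vector space on which `Nnorm` is a complete norm),
and for each `k` the coordinate functional `x ↦ x_k` is continuous on it. -/
theorem stmt_0 (q : ℕ → ℝ) (hq : ∀ k, 0 < q k) :
    -- `(N̄^q_{Δ⁻})_∞` is a `ℂ`-linear subspace of the space of all sequences: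
    ((0 : ℕ → ℂ) ∈ Ninf q) ∧
    (∀ x ∈ Ninf q, ∀ y ∈ Ninf q, x + y ∈ Ninf q) ∧
    (∀ a : ℂ, ∀ x ∈ Ninf q, a • x ∈ Ninf q) ∧
    -- `Nnorm` is a norm on it:
    (∀ x ∈ Ninf q, (Nnorm q x = 0 ↔ x = 0)) ∧
    (∀ x ∈ Ninf q, ∀ y ∈ Ninf q, Nnorm q (x + y) ≤ Nnorm q x + Nnorm q y) ∧
    (∀ a : ℂ, ∀ x ∈ Ninf q, Nnorm q (a • x) = ‖a‖ * Nnorm q x) ∧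
    -- it is complete (every Cauchy sequence converges in the space):
    (∀ u : ℕ → (ℕ → ℂ), (∀ m, u m ∈ Ninf q) →
      (∀ ε > (0 : ℝ), ∃ N, ∀ m₁ ≥ N, ∀ m₂ ≥ N, Nnorm q (u m₁ - u m₂) < ε) →
      ∃ y ∈ Ninf q, ∀ ε > (0 : ℝ), ∃ N, ∀ m ≥ N, Nnorm q (u m - y) < ε) ∧
    -- each coordinate functional `x ↦ x_k` is continuous:
    (∀ k : ℕ, ∀ x ∈ Ninf q, ∀ ε > (0 : ℝ), ∃ δ > (0 : ℝ), ∀ y ∈ Ninf q,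
      Nnorm q (y - x) < δ → ‖y k - x k‖ < ε) := by
  refine ⟨⟨0, fun n => by rw [NqAux.tau_zero]; simp⟩,
    fun x hx y hy => NqAux.Ninf_add x hx y hy,
    fun a x hx => NqAux.Ninf_smul a x hx,
    ?_, ?_, ?_, ?_, ?_⟩
  · -- norm zero iff
    intro x hx
    constructor
    · intro h
      funext k
      have hM : ∀ n, ‖tau q x n‖ ≤ (0 : ℝ) := fun n => h ▸ NqAux.le_Nnorm x hx n
      have hb := NqAux.coord_bound hq x 0 hM k
      rw [mul_zero] at hb
      simpa using norm_le_zero_iff.mp hb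
    · intro h
      subst h
      unfold Nnorm
      simp [NqAux.tau_zero]
  · -- triangle inequality
    intro x hx y hy
    unfold Nnorm
    apply ciSup_le
    intro n
    rw [NqAux.tau_add]
    exact (norm_add_le _ _).trans (add_le_add (NqAux.le_Nnorm x hx n) (NqAux.le_Nnorm y hy n))
  · -- homogeneity
    intro a x hx
    unfold Nnorm
    simp only [NqAux.tau_smul, norm_mul]
    exact (Real.mul_iSup_of_nonneg (norm_nonneg a) _).symm
  · -- completeness
    intro u hu hc
    have hcauchy : ∀ k, CauchySeq (fun m => u m k) := by
      intro k
      rw [Metric.cauchySeq_iff]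
      intro ε hε
      have hCc := NqAux.Cc_pos hq k
      obtain ⟨N, hN⟩ := hc (ε / NqAux.Cc q k) (by positivity)
      refine ⟨N, fun m₁ hm₁ m₂ hm₂ => ?_⟩
      have hmem := NqAux.Ninf_sub _ (hu m₁) _ (hu m₂)
      have hb := NqAux.coord_bound hq (u m₁ - u m₂) (Nnorm q (u m₁ - u m₂))
        (fun n => NqAux.le_Nnorm _ hmem n) k
      rw [dist_eq_norm]
      have hlt : ‖(u m₁ - u m₂) k‖ < NqAux.Cc q k * (ε / NqAux.Cc q k) :=
        lt_of_le_of_lt hb (mul_lt_mul_of_pos_left (hN m₁ hm₁ m₂ hm₂) hCc)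
      rw [mul_div_cancel₀ _ hCc.ne'] at hlt
      simpa using hlt
    have hylim : ∀ k, ∃ l, Tendsto (fun m => u m k) atTop (𝓝 l) :=
      fun k => cauchySeq_tendsto_of_complete (hcauchy k)
    choose y hy using hylim
    have htau : ∀ n, Tendsto (fun m => tau q (u m) n) atTop (𝓝 (tau q y n)) := by
      intro n
      unfold tau
      apply Tendsto.const_mul
      apply tendsto_finset_sum
      intro k _
      apply Tendsto.const_mul
      unfold deltaM
      refine Tendsto.sub ?_ (hy k)
      by_cases hk : k = 0
      · simp only [if_pos hk]
        exact tendsto_const_nhds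
      · simp only [if_neg hk]
        exact hy (k - 1)
    have key : ∀ ε > (0 : ℝ), ∃ N, ∀ m ≥ N, ∀ n, ‖tau q (u m) n - tau q y n‖ ≤ ε := by
      intro ε hε
      obtain ⟨N, hN⟩ := hc ε hε
      refine ⟨N, fun m hm n => ?_⟩
      have hlim : Tendsto (fun m₂ => ‖tau q (u m) n - tau q (u m₂) n‖) atTop
          (𝓝 ‖tau q (u m) n - tau q y n‖) :=
        (Tendsto.sub tendsto_const_nhds (htau n)).norm
      apply le_of_tendsto hlim
      filter_upwards [eventually_ge_atTop N] with m₂ hm₂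
      have hmem := NqAux.Ninf_sub _ (hu m) _ (hu m₂)
      have hle := NqAux.le_Nnorm _ hmem n
      rw [NqAux.tau_sub] at hle
      exact hle.trans (hN m hm m₂ hm₂).le
    obtain ⟨N₁, hN₁⟩ := key 1 one_pos
    obtain ⟨M₁, hM₁⟩ := hu N₁
    have hymem : y ∈ Ninf q := by
      refine ⟨M₁ + 1, fun n => ?_⟩
      have h1 := hN₁ N₁ le_rfl n
      have hrw : tau q y n = tau q (u N₁) n - (tau q (u N₁) n - tau q y n) := by ring
      rw [hrw]
      exact (norm_sub_le _ _).trans (add_le_add (hM₁ n) h1)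
    refine ⟨y, hymem, fun ε hε => ?_⟩
    obtain ⟨N, hN⟩ := key (ε / 2) (by linarith)
    refine ⟨N, fun m hm => ?_⟩
    have hle : Nnorm q (u m - y) ≤ ε / 2 := by
      unfold Nnorm
      apply ciSup_le
      intro n
      rw [NqAux.tau_sub]
      exact hN m hm n
    linarith
  · -- coordinate continuity
    intro k x hx ε hε
    have hCc := NqAux.Cc_pos hq k
    refine ⟨ε / NqAux.Cc q k, by positivity, fun y hy hlt => ?_⟩
    have hmem := NqAux.Ninf_sub y hy x hx
    have hb := NqAux.coord_bound hq (y - x) (Nnorm q (y - x))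
      (fun n => NqAux.le_Nnorm _ hmem n) k
    have hlt2 : ‖(y - x) k‖ < NqAux.Cc q k * (ε / NqAux.Cc q k) :=
      lt_of_le_of_lt hb (mul_lt_mul_of_pos_left hlt hCc)
    rw [mul_div_cancel₀ _ hCc.ne'] at hlt2
    simpa using hlt2
end

section
/- Each of the spaces (N̄^q_{Δ⁻})_0 and (N̄^q_{Δ⁻}), equipped with the norm ‖x‖ = sup_n |τ_n(x)|, is a BK space: it is a Banach space over ℂ (in particular, it is a closed subspace of (N̄^q_{Δ⁻})_∞) and, for each k, the coordinate functional x ↦ x_k is continuous on it. -/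
open Finset Filter Topology

open NqDelta

section Helpers

variable (q : ℕ → ℝ)

lemma Qs_pos (hq : ∀ k, 0 < q k) (n : ℕ) : 0 < Qs q n :=
  Finset.sum_pos (fun i _ => hq i) (by simp)

lemma deltaM_add (x y : ℕ → ℂ) (k : ℕ) :
    deltaM (x + y) k = deltaM x k + deltaM y k := by
  simp only [deltaM, Pi.add_apply]; split <;> ring

lemma deltaM_sub (x y : ℕ → ℂ) (k : ℕ) :
    deltaM (x - y) k = deltaM x k - deltaM y k := by
  simp only [deltaM, Pi.sub_apply]; split <;> ring

lemma deltaM_smul (a : ℂ) (x : ℕ → ℂ) (k : ℕ) :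
    deltaM (a • x) k = a * deltaM x k := by
  simp only [deltaM, Pi.smul_apply, smul_eq_mul]; split <;> ring

lemma tau_add (x y : ℕ → ℂ) (n : ℕ) :
    tau q (x + y) n = tau q x n + tau q y n := by
  simp only [tau, deltaM_add, mul_add, Finset.sum_add_distrib]

lemma tau_sub (x y : ℕ → ℂ) (n : ℕ) :
    tau q (x - y) n = tau q x n - tau q y n := by
  simp only [tau, deltaM_sub, mul_sub, Finset.sum_sub_distrib]

lemma tau_smul (a : ℂ) (x : ℕ → ℂ) (n : ℕ) :
    tau q (a • x) n = a * tau q x n := by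
  simp only [tau, deltaM_smul, Finset.mul_sum]
  exact Finset.sum_congr rfl fun k _ => by ring

lemma tau_zero (n : ℕ) : tau q (0 : ℕ → ℂ) n = 0 := by
  simp [tau, deltaM]

lemma sum_q_deltaM (hq : ∀ k, 0 < q k) (x : ℕ → ℂ) (n : ℕ) :
    ∑ k ∈ Finset.range (n + 1), (q k : ℂ) * deltaM x k = (Qs q n : ℂ) * tau q x n := by
  have h : (Qs q n : ℂ) ≠ 0 := by exact_mod_cast (Qs_pos q hq n).ne'
  rw [tau, ← mul_assoc, mul_inv_cancel₀ h, one_mul]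

lemma q_deltaM_eq (hq : ∀ k, 0 < q k) (x : ℕ → ℂ) (n : ℕ) :
    (q n : ℂ) * deltaM x n =
      (Qs q n : ℂ) * tau q x n -
        (if n = 0 then 0 else (Qs q (n - 1) : ℂ) * tau q x (n - 1)) := by
  cases n with
  | zero =>
      have := sum_q_deltaM q hq x 0
      simpa using this
  | succ n =>
      have h1 := sum_q_deltaM q hq x (n + 1)
      have h0 := sum_q_deltaM q hq x n
      rw [Finset.sum_range_succ, h0] at h1
      simp only [Nat.succ_ne_zero, if_false, Nat.add_sub_cancel]
      linear_combination h1

lemma sum_deltaM (x : ℕ → ℂ) (k : ℕ) :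
    ∑ n ∈ Finset.range (k + 1), deltaM x n = -x k := by
  induction k with
  | zero => simp [deltaM]
  | succ k ih =>
      rw [Finset.sum_range_succ, ih]
      simp only [deltaM, Nat.succ_ne_zero, if_false, Nat.add_sub_cancel]
      ring

/-- The coordinate constant. -/
noncomputable def Cc (q : ℕ → ℝ) (k : ℕ) : ℝ :=
  ∑ n ∈ Finset.range (k + 1), (Qs q n + (if n = 0 then 0 else Qs q (n - 1))) / q n

lemma Cc_nonneg (hq : ∀ k, 0 < q k) (k : ℕ) : 0 ≤ Cc q k := by
  refine Finset.sum_nonneg fun n _ => div_nonneg ?_ (hq n).le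
  have h1 := (Qs_pos q hq n).le
  split <;> [simpa using h1; exact add_nonneg h1 (Qs_pos q hq _).le]

lemma coord_bound (hq : ∀ k, 0 < q k) (x : ℕ → ℂ) (B : ℝ)
    (hB : ∀ n, ‖tau q x n‖ ≤ B) (k : ℕ) : ‖x k‖ ≤ Cc q k * B := by
  have hB0 : 0 ≤ B := le_trans (norm_nonneg _) (hB 0)
  have hd : ∀ n, ‖deltaM x n‖ ≤ (Qs q n + (if n = 0 then 0 else Qs q (n - 1))) / q n * B := by
    intro n
    have h1 : ‖(q n : ℂ) * deltaM x n‖ ≤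
        (Qs q n + (if n = 0 then 0 else Qs q (n - 1))) * B := by
      rw [q_deltaM_eq q hq x n]
      refine (norm_sub_le _ _).trans ?_
      rw [add_mul]
      gcongr
      · rw [norm_mul, Complex.norm_real, Real.norm_of_nonneg (Qs_pos q hq n).le]
        exact mul_le_mul_of_nonneg_left (hB n) (Qs_pos q hq n).le
      · split
        · simp
        · rw [norm_mul, Complex.norm_real, Real.norm_of_nonneg (Qs_pos q hq _).le]
          exact mul_le_mul_of_nonneg_left (hB _) (Qs_pos q hq _).le
    have hqn : ‖(q n : ℂ) * deltaM x n‖ = q n * ‖deltaM x n‖ := by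
      rw [norm_mul, Complex.norm_real, Real.norm_of_nonneg (hq n).le]
    rw [hqn] at h1
    rw [div_mul_eq_mul_div, le_div_iff₀ (hq n)]
    calc ‖deltaM x n‖ * q n = q n * ‖deltaM x n‖ := mul_comm _ _
      _ ≤ _ := h1
  calc ‖x k‖ = ‖∑ n ∈ Finset.range (k + 1), deltaM x n‖ := by
        rw [sum_deltaM]; simp
    _ ≤ ∑ n ∈ Finset.range (k + 1), ‖deltaM x n‖ := norm_sum_le _ _
    _ ≤ ∑ n ∈ Finset.range (k + 1),
          (Qs q n + (if n = 0 then 0 else Qs q (n - 1))) / q n * B :=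
        Finset.sum_le_sum fun n _ => hd n
    _ = Cc q k * B := by rw [Cc, Finset.sum_mul]

lemma bddAbove_tau (x : ℕ → ℂ) (hx : x ∈ Ninf q) :
    BddAbove (Set.range fun n => ‖tau q x n‖) := by
  obtain ⟨M, hM⟩ := hx
  exact ⟨M, by rintro _ ⟨n, rfl⟩; exact hM n⟩

lemma norm_tau_le (x : ℕ → ℂ) (hx : x ∈ Ninf q) (n : ℕ) :
    ‖tau q x n‖ ≤ Nnorm q x :=
  le_ciSup (bddAbove_tau q x hx) n

lemma Nnorm_le (x : ℕ → ℂ) (M : ℝ) (h : ∀ n, ‖tau q x n‖ ≤ M) : Nnorm q x ≤ M :=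
  ciSup_le h

lemma Nnorm_nonneg (x : ℕ → ℂ) : 0 ≤ Nnorm q x :=
  Real.iSup_nonneg fun n => norm_nonneg _

lemma Ninf_sub (x y : ℕ → ℂ) (hx : x ∈ Ninf q) (hy : y ∈ Ninf q) : x - y ∈ Ninf q := by
  obtain ⟨Mx, hMx⟩ := hx; obtain ⟨My, hMy⟩ := hy
  exact ⟨Mx + My, fun n => by
    rw [tau_sub]
    exact (norm_sub_le _ _).trans (add_le_add (hMx n) (hMy n))⟩

lemma conv_mem_Ninf (x : ℕ → ℂ) (h : ∃ l : ℂ, Tendsto (tau q x) atTop (𝓝 l)) :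
    x ∈ Ninf q := by
  obtain ⟨l, h⟩ := h
  obtain ⟨M, hM⟩ := (h.norm).bddAbove_range
  exact ⟨M, fun n => hM (Set.mem_range_self n)⟩

lemma tau_tendsto_of_coord (u : ℕ → ℕ → ℂ) (y : ℕ → ℂ)
    (hy : ∀ k, Tendsto (fun m => u m k) atTop (𝓝 (y k))) (n : ℕ) :
    Tendsto (fun m => tau q (u m) n) atTop (𝓝 (tau q y n)) := by
  unfold tau
  apply Tendsto.const_mul
  apply tendsto_finset_sum
  intro k _
  apply Tendsto.const_mul
  unfold deltaM
  by_cases hk : k = 0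
  · subst hk; simpa using (hy 0).neg
  · simp only [if_neg hk]
    exact (hy (k - 1)).sub (hy k)

lemma approx_tendsto_zero (f : ℕ → ℂ)
    (h : ∀ ε > (0 : ℝ), ∃ g : ℕ → ℂ, Tendsto g atTop (𝓝 0) ∧ ∀ n, ‖f n - g n‖ ≤ ε) :
    Tendsto f atTop (𝓝 0) := by
  rw [Metric.tendsto_atTop]
  intro ε hε
  obtain ⟨g, hg, hfg⟩ := h (ε / 2) (by positivity)
  rw [Metric.tendsto_atTop] at hg
  obtain ⟨N, hN⟩ := hg (ε / 2) (by positivity)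
  refine ⟨N, fun n hn => ?_⟩
  have h1 := hfg n
  have h2 := hN n hn
  rw [dist_eq_norm, sub_zero] at *
  calc ‖f n‖ ≤ ‖f n - g n‖ + ‖g n‖ := by
        simpa using norm_add_le (f n - g n) (g n)
    _ < ε := by linarith

lemma approx_conv (f : ℕ → ℂ)
    (h : ∀ ε > (0 : ℝ), ∃ g : ℕ → ℂ, (∃ l : ℂ, Tendsto g atTop (𝓝 l)) ∧ ∀ n, ‖f n - g n‖ ≤ ε) :
    ∃ l : ℂ, Tendsto f atTop (𝓝 l) := by
  have hc : CauchySeq f := by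
    rw [Metric.cauchySeq_iff]
    intro ε hε
    obtain ⟨g, ⟨l, hg⟩, hfg⟩ := h (ε / 4) (by positivity)
    have hgc := hg.cauchySeq
    rw [Metric.cauchySeq_iff] at hgc
    obtain ⟨N, hN⟩ := hgc (ε / 4) (by positivity)
    refine ⟨N, fun m hm n hn => ?_⟩
    have h1 := hfg m
    have h2 := hfg n
    have h3 := hN m hm n hn
    have h4 : dist (f m) (f n) ≤ dist (f m) (g m) + dist (g m) (g n) + dist (g n) (f n) :=
      dist_triangle4 _ _ _ _
    simp only [dist_eq_norm] at h3 h4 ⊢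
    have h5 : ‖g n - f n‖ = ‖f n - g n‖ := norm_sub_rev _ _
    linarith
  exact cauchySeq_tendsto_of_complete hc

end Helpers

/-- Each of `(N̄^q_{Δ⁻})_0` and `(N̄^q_{Δ⁻})`, with the norm
`‖x‖ = sup_n |τ_n(x)|`, is a BK space: a Banach space over `ℂ` (in particular a closed
subspace of `(N̄^q_{Δ⁻})_∞`) on which every coordinate functional is continuous. -/
theorem stmt_1 (q : ℕ → ℝ) (hq : ∀ k, 0 < q k) (X : Set (ℕ → ℂ))
    (hX : X = Nzero q ∨ X = Nconv q) :
    -- `X` is a `ℂ`-linear subspace: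
    ((0 : ℕ → ℂ) ∈ X) ∧
    (∀ x ∈ X, ∀ y ∈ X, x + y ∈ X) ∧
    (∀ a : ℂ, ∀ x ∈ X, a • x ∈ X) ∧
    -- `Nnorm` is a norm on it:
    (∀ x ∈ X, (Nnorm q x = 0 ↔ x = 0)) ∧
    (∀ x ∈ X, ∀ y ∈ X, Nnorm q (x + y) ≤ Nnorm q x + Nnorm q y) ∧
    (∀ a : ℂ, ∀ x ∈ X, Nnorm q (a • x) = ‖a‖ * Nnorm q x) ∧
    -- it is a closed subspace of `(N̄^q_{Δ⁻})_∞`: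
    X ⊆ Ninf q ∧
    (∀ u : ℕ → (ℕ → ℂ), (∀ m, u m ∈ X) → ∀ y ∈ Ninf q,
      (∀ ε > (0 : ℝ), ∃ N, ∀ m ≥ N, Nnorm q (u m - y) < ε) → y ∈ X) ∧
    -- it is complete (every Cauchy sequence converges in the space):
    (∀ u : ℕ → (ℕ → ℂ), (∀ m, u m ∈ X) →
      (∀ ε > (0 : ℝ), ∃ N, ∀ m₁ ≥ N, ∀ m₂ ≥ N, Nnorm q (u m₁ - u m₂) < ε) →
      ∃ y ∈ X, ∀ ε > (0 : ℝ), ∃ N, ∀ m ≥ N, Nnorm q (u m - y) < ε) ∧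
    -- each coordinate functional `x ↦ x_k` is continuous:
    (∀ k : ℕ, ∀ x ∈ X, ∀ ε > (0 : ℝ), ∃ δ > (0 : ℝ), ∀ y ∈ X,
      Nnorm q (y - x) < δ → ‖y k - x k‖ < ε) := by
  have hXc : ∀ x ∈ X, ∃ l : ℂ, Tendsto (tau q x) atTop (𝓝 l) := by
    rcases hX with rfl | rfl
    · exact fun x hx => ⟨0, hx⟩
    · exact fun x hx => hx
  have hXinf : X ⊆ Ninf q := fun x hx => conv_mem_Ninf q x (hXc x hx)
  have hcoord : ∀ x ∈ Ninf q, ∀ k, ‖x k‖ ≤ Cc q k * Nnorm q x := fun x hx k =>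
    coord_bound q hq x (Nnorm q x) (norm_tau_le q x hx) k
  have htz : tau q (0 : ℕ → ℂ) = fun _ => (0 : ℂ) := funext (tau_zero q)
  have h0 : (0 : ℕ → ℂ) ∈ X := by
    rcases hX with rfl | rfl
    · show Tendsto (tau q 0) atTop (𝓝 0)
      rw [htz]; exact tendsto_const_nhds
    · exact ⟨0, by rw [htz]; exact tendsto_const_nhds⟩
  have hadd : ∀ x ∈ X, ∀ y ∈ X, x + y ∈ X := by
    intro x hx y hy
    rcases hX with rfl | rfl
    · show Tendsto (tau q (x + y)) atTop (𝓝 0)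
      have h1 : tau q (x + y) = fun n => tau q x n + tau q y n := funext (tau_add q x y)
      rw [h1]; simpa using Tendsto.add hx hy
    · obtain ⟨lx, hx⟩ := hx; obtain ⟨ly, hy⟩ := hy
      have h1 : tau q (x + y) = fun n => tau q x n + tau q y n := funext (tau_add q x y)
      exact ⟨lx + ly, by rw [h1]; exact Tendsto.add hx hy⟩
  have hsmul : ∀ a : ℂ, ∀ x ∈ X, a • x ∈ X := by
    intro a x hx
    have h1 : tau q (a • x) = fun n => a * tau q x n := funext (tau_smul q a x)
    rcases hX with rfl | rfl
    · show Tendsto (tau q (a • x)) atTop (𝓝 0)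
      rw [h1]; simpa using Tendsto.const_mul a hx
    · obtain ⟨l, hx⟩ := hx
      exact ⟨a * l, by rw [h1]; exact Tendsto.const_mul a hx⟩
  have hnormzero : ∀ x ∈ X, (Nnorm q x = 0 ↔ x = 0) := by
    intro x hx
    constructor
    · intro h
      funext k
      have h1 := hcoord x (hXinf hx) k
      rw [h, mul_zero] at h1
      simpa using norm_le_zero_iff.mp h1
    · rintro rfl
      simp [Nnorm, tau_zero, ciSup_const]
  have htri : ∀ x ∈ X, ∀ y ∈ X, Nnorm q (x + y) ≤ Nnorm q x + Nnorm q y := by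
    intro x hx y hy
    refine Nnorm_le q _ _ fun n => ?_
    rw [tau_add]
    exact (norm_add_le _ _).trans
      (add_le_add (norm_tau_le q x (hXinf hx) n) (norm_tau_le q y (hXinf hy) n))
  have hhom : ∀ a : ℂ, ∀ x ∈ X, Nnorm q (a • x) = ‖a‖ * Nnorm q x := by
    intro a x _
    have h1 : ∀ n, ‖tau q (a • x) n‖ = ‖a‖ * ‖tau q x n‖ := fun n => by
      rw [tau_smul, norm_mul]
    simp only [Nnorm, h1]
    exact (Real.mul_iSup_of_nonneg (norm_nonneg a) _).symm
  have hclosed : ∀ u : ℕ → (ℕ → ℂ), (∀ m, u m ∈ X) → ∀ y ∈ Ninf q,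
      (∀ ε > (0 : ℝ), ∃ N, ∀ m ≥ N, Nnorm q (u m - y) < ε) → y ∈ X := by
    intro u hu y hyinf hconv
    have hb : ∀ m n, ‖tau q y n - tau q (u m) n‖ ≤ Nnorm q (u m - y) := by
      intro m n
      have h2 := norm_tau_le q (u m - y) (Ninf_sub q _ _ (hXinf (hu m)) hyinf) n
      rw [tau_sub, norm_sub_rev] at h2
      exact h2
    rcases hX with rfl | rfl
    · refine approx_tendsto_zero (tau q y) fun ε hε => ?_
      obtain ⟨N, hN⟩ := hconv ε hε
      exact ⟨tau q (u N), hu N, fun n => (hb N n).trans (hN N le_rfl).le⟩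
    · refine approx_conv (tau q y) fun ε hε => ?_
      obtain ⟨N, hN⟩ := hconv ε hε
      exact ⟨tau q (u N), hu N, fun n => (hb N n).trans (hN N le_rfl).le⟩
  have hcomp : ∀ u : ℕ → (ℕ → ℂ), (∀ m, u m ∈ X) →
      (∀ ε > (0 : ℝ), ∃ N, ∀ m₁ ≥ N, ∀ m₂ ≥ N, Nnorm q (u m₁ - u m₂) < ε) →
      ∃ y ∈ X, ∀ ε > (0 : ℝ), ∃ N, ∀ m ≥ N, Nnorm q (u m - y) < ε := by
    intro u hu hC
    have huinf : ∀ m, u m ∈ Ninf q := fun m => hXinf (hu m)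
    have hsubinf : ∀ m₁ m₂, u m₁ - u m₂ ∈ Ninf q := fun m₁ m₂ =>
      Ninf_sub q _ _ (huinf m₁) (huinf m₂)
    have hcoordlim : ∀ k, ∃ l : ℂ, Tendsto (fun m => u m k) atTop (𝓝 l) := by
      intro k
      have hcs : CauchySeq (fun m => u m k) := by
        rw [Metric.cauchySeq_iff]
        intro ε hε
        have hCk := Cc_nonneg q hq k
        obtain ⟨N, hN⟩ := hC (ε / (Cc q k + 1)) (by positivity)
        refine ⟨N, fun m₁ hm₁ m₂ hm₂ => ?_⟩
        have h1 : ‖(u m₁ - u m₂) k‖ ≤ Cc q k * Nnorm q (u m₁ - u m₂) :=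
          hcoord _ (hsubinf m₁ m₂) k
        simp only [Pi.sub_apply] at h1
        have h3 : Cc q k * Nnorm q (u m₁ - u m₂) ≤ Cc q k * (ε / (Cc q k + 1)) :=
          mul_le_mul_of_nonneg_left (hN m₁ hm₁ m₂ hm₂).le hCk
        have h4 : Cc q k * (ε / (Cc q k + 1)) < ε := by
          rw [mul_div_assoc', div_lt_iff₀ (by linarith)]
          nlinarith
        rw [dist_eq_norm]
        linarith
      exact cauchySeq_tendsto_of_complete hcs
    obtain ⟨y, hy⟩ : ∃ y : ℕ → ℂ, ∀ k, Tendsto (fun m => u m k) atTop (𝓝 (y k)) :=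
      ⟨fun k => (hcoordlim k).choose, fun k => (hcoordlim k).choose_spec⟩
    have key : ∀ ε > (0 : ℝ), ∃ N, ∀ m ≥ N, ∀ n, ‖tau q (u m) n - tau q y n‖ ≤ ε := by
      intro ε hε
      obtain ⟨N, hN⟩ := hC ε hε
      refine ⟨N, fun m hm n => ?_⟩
      have ht : Tendsto (fun m₂ => ‖tau q (u m) n - tau q (u m₂) n‖) atTop
          (𝓝 ‖tau q (u m) n - tau q y n‖) :=
        (Tendsto.sub tendsto_const_nhds (tau_tendsto_of_coord q u y hy n)).norm
      refine le_of_tendsto ht ?_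
      filter_upwards [eventually_ge_atTop N] with m₂ hm₂
      have h1 : tau q (u m) n - tau q (u m₂) n = tau q (u m - u m₂) n := (tau_sub q _ _ n).symm
      rw [h1]
      exact (norm_tau_le q _ (hsubinf m m₂) n).trans (hN m hm m₂ hm₂).le
    have hyinf : y ∈ Ninf q := by
      obtain ⟨N, hN⟩ := key 1 one_pos
      obtain ⟨M, hM⟩ := huinf N
      refine ⟨M + 1, fun n => ?_⟩
      have h1 := hN N le_rfl n
      rw [norm_sub_rev] at h1
      calc ‖tau q y n‖ ≤ ‖tau q y n - tau q (u N) n‖ + ‖tau q (u N) n‖ := by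
            simpa using norm_add_le (tau q y n - tau q (u N) n) (tau q (u N) n)
        _ ≤ 1 + M := add_le_add h1 (hM n)
        _ = M + 1 := by ring
    have hyX : y ∈ X := by
      rcases hX with rfl | rfl
      · refine approx_tendsto_zero (tau q y) fun ε hε => ?_
        obtain ⟨N, hN⟩ := key ε hε
        exact ⟨tau q (u N), hu N, fun n => by rw [norm_sub_rev]; exact hN N le_rfl n⟩
      · refine approx_conv (tau q y) fun ε hε => ?_
        obtain ⟨N, hN⟩ := key ε hε
        exact ⟨tau q (u N), hu N, fun n => by rw [norm_sub_rev]; exact hN N le_rfl n⟩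
    refine ⟨y, hyX, fun ε hε => ?_⟩
    obtain ⟨N, hN⟩ := key (ε / 2) (by positivity)
    refine ⟨N, fun m hm => ?_⟩
    have h1 : Nnorm q (u m - y) ≤ ε / 2 :=
      Nnorm_le q _ _ fun n => by rw [tau_sub]; exact hN m hm n
    linarith
  have hcont : ∀ k : ℕ, ∀ x ∈ X, ∀ ε > (0 : ℝ), ∃ δ > (0 : ℝ), ∀ y ∈ X,
      Nnorm q (y - x) < δ → ‖y k - x k‖ < ε := by
    intro k x hx ε hε
    have hCk := Cc_nonneg q hq k
    refine ⟨ε / (Cc q k + 1), by positivity, fun y hy hd => ?_⟩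
    have h1 : ‖(y - x) k‖ ≤ Cc q k * Nnorm q (y - x) :=
      hcoord _ (Ninf_sub q _ _ (hXinf hy) (hXinf hx)) k
    simp only [Pi.sub_apply] at h1
    have h3 : Cc q k * Nnorm q (y - x) ≤ Cc q k * (ε / (Cc q k + 1)) :=
      mul_le_mul_of_nonneg_left hd.le hCk
    have h4 : Cc q k * (ε / (Cc q k + 1)) < ε := by
      rw [mul_div_assoc', div_lt_iff₀ (by linarith)]
      nlinarith
    linarith
  exact ⟨h0, hadd, hsmul, hnormzero, htri, hhom, hXinf, hclosed, hcomp, hcont⟩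
end
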